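/- Assume there exists N ∈ ℕ such that p_{n+1} − p_n ≤ (log 2)·p_n − 1 for every n ≥ N. Then there exists a real α > 0 such that, defining the sequence (a_n)_{n ∈ ℕ} by a_0 = α and a_{n+1} = 2^{a_n} for all n, the sequence (⌊a_n⌋)_{n ∈ ℕ} is strictly increasing and ⌊a_n⌋ is a prime number for every n ∈ ℕ. -/

import Mathlib

open Real

lemma aux_prime_interval (N : ℕ)
    (hgap : ∀ n : ℕ, N ≤ n →
      ((Nat.nth Nat.Prime (n + 1) : ℝ) - (Nat.nth Nat.Prime n : ℝ)) ≤
        Real.log 2 * (Nat.nth Nat.Prime n : ℝ) - 1) (x : ℕ) :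
    ∃ p : ℕ, Nat.Prime p ∧
      (max (Nat.nth Nat.Prime N + 1) 4 ≤ x → x ≤ p ∧ p + 2 ≤ 2 * x) := by
  have hinf : (setOf Nat.Prime).Infinite := Nat.infinite_setOf_prime
  by_cases hx : max (Nat.nth Nat.Prime N + 1) 4 ≤ x
  · have hx4 : 4 ≤ x := le_trans (le_max_right _ _) hx
    have hxN : Nat.nth Nat.Prime N + 1 ≤ x := le_trans (le_max_left _ _) hx
    set m := Nat.count Nat.Prime x with hm
    have hm2 : 2 ≤ m := by
      have : Nat.count Nat.Prime 4 ≤ m := Nat.count_monotone _ hx4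
      have h4 : Nat.count Nat.Prime 4 = 2 := by decide
      omega
    have hxle : x ≤ Nat.nth Nat.Prime m := Nat.le_nth_count hinf x
    obtain ⟨k, hk⟩ : ∃ k, m = k + 1 := ⟨m - 1, by omega⟩
    have hklt : Nat.nth Nat.Prime k < x := Nat.nth_lt_of_lt_count (by omega)
    have hNk : N ≤ k := by
      have : Nat.nth Nat.Prime N < Nat.nth Nat.Prime m :=
        lt_of_lt_of_le (by omega) hxle
      have := (Nat.nth_lt_nth hinf).1 this
      omega
    refine ⟨Nat.nth Nat.Prime m, Nat.nth_mem_of_infinite hinf m, fun _ => ⟨hxle, ?_⟩⟩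
    have hg := hgap k hNk
    rw [hk]
    have hc1 : (Nat.nth Nat.Prime k : ℝ) + 1 ≤ (x : ℝ) := by exact_mod_cast hklt
    have hlog1 : Real.log 2 < 1 := lt_trans Real.log_two_lt_d9 (by norm_num)
    have hlog0 : 0 < Real.log 2 := Real.log_pos (by norm_num)
    have hx1 : (4 : ℝ) ≤ (x : ℝ) := by exact_mod_cast hx4
    have hnn : (0:ℝ) ≤ (Nat.nth Nat.Prime k : ℝ) := Nat.cast_nonneg _
    have key : (Nat.nth Nat.Prime (k+1) : ℝ) + 2 ≤ 2 * (x : ℝ) := by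
      nlinarith [hg, hc1, hlog1, hlog0, hx1, hnn]
    exact_mod_cast key
  · exact ⟨2, Nat.prime_two, fun h => absurd h hx⟩

theorem stmt_6
    (hgap : ∃ N : ℕ, ∀ n : ℕ, N ≤ n →
      ((Nat.nth Nat.Prime (n + 1) : ℝ) - (Nat.nth Nat.Prime n : ℝ)) ≤
        Real.log 2 * (Nat.nth Nat.Prime n : ℝ) - 1) :
    ∃ α : ℝ, 0 < α ∧ ∀ a : ℕ → ℝ, a 0 = α → (∀ n : ℕ, a (n + 1) = (2 : ℝ) ^ (a n)) →
      (∀ n : ℕ, ⌊a n⌋ < ⌊a (n + 1)⌋) ∧ (∀ n : ℕ, Prime ⌊a n⌋) := by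
  obtain ⟨N, hgap⟩ := hgap
  set M := max (Nat.nth Nat.Prime N + 1) 4 with hM
  choose f hf1 hf2 using aux_prime_interval N hgap
  obtain ⟨q0, hq0M, hq0p⟩ := Nat.exists_infinite_primes M
  -- the sequence of primes
  set q : ℕ → ℕ := fun n => Nat.rec q0 (fun _ r => f (2 ^ r)) n with hqdef
  have hqsucc : ∀ n, q (n + 1) = f (2 ^ q n) := fun n => rfl
  have hinv : ∀ n, Nat.Prime (q n) ∧ M ≤ q n := by
    intro n
    induction n with
    | zero => exact ⟨hq0p, hq0M⟩
    | succ n ih =>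
      have hMx : M ≤ 2 ^ q n := le_trans ih.2 (Nat.lt_two_pow_self (n := q n)).le
      refine ⟨by rw [hqsucc]; exact hf1 _, ?_⟩
      rw [hqsucc]
      exact le_trans hMx ((hf2 _ hMx).1)
  have hqprime : ∀ n, Nat.Prime (q n) := fun n => (hinv n).1
  have hq4 : ∀ n, 4 ≤ q n := fun n => le_trans (le_max_right _ _) (hinv n).2
  have hstep : ∀ n, 2 ^ q n ≤ q (n + 1) ∧ q (n + 1) + 2 ≤ 2 ^ (q n + 1) := by
    intro n
    have hMx : M ≤ 2 ^ q n := le_trans (hinv n).2 (Nat.lt_two_pow_self (n := q n)).le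
    have h := hf2 (2 ^ q n) hMx
    rw [hqsucc]
    refine ⟨h.1, ?_⟩
    calc f (2 ^ q n) + 2 ≤ 2 * 2 ^ q n := h.2
      _ = 2 ^ (q n + 1) := by ring
  -- real functions
  set g : ℝ → ℝ := fun t => (2 : ℝ) ^ t with hgdef
  set L : ℝ → ℝ := fun t => Real.logb 2 t with hLdef
  have hgmono : StrictMono g := fun a b h =>
    (Real.rpow_lt_rpow_left_iff (by norm_num : (1:ℝ) < 2)).2 h
  have hE : ∀ n, StrictMono (g^[n]) := fun n => hgmono.iterate n
  -- casting helper : g (m : ℕ cast) = 2^m cast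
  have hcast : ∀ m : ℕ, g ((m : ℝ)) = ((2 ^ m : ℕ) : ℝ) := by
    intro m
    simp only [hgdef]
    rw [Real.rpow_natCast]
    push_cast
    ring
  -- L step: L y ≥ q n when y ≥ q (n+1)
  have hLstep : ∀ m (y : ℝ), ((q (m + 1) : ℝ)) ≤ y → ((q m : ℝ)) ≤ L y := by
    intro m y hy
    have h1 : ((2 ^ q m : ℕ) : ℝ) ≤ y := by
      refine le_trans ?_ hy
      exact_mod_cast (hstep m).1
    have h2 : (0:ℝ) < ((2 ^ q m : ℕ) : ℝ) := by positivity
    have := Real.logb_le_logb_of_le (by norm_num : (1:ℝ) < 2) h2 h1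
    refine le_trans ?_ this
    rw [← hcast]
    simp only [hgdef]
    rw [Real.logb_rpow (by norm_num) (by norm_num)]
  -- cancellation
  have hcancel : ∀ n (y : ℝ), ((q n : ℝ)) ≤ y → g^[n] (L^[n] y) = y := by
    intro n
    induction n with
    | zero => intro y _; simp
    | succ n ih =>
      intro y hy
      have hLy : ((q n : ℝ)) ≤ L y := hLstep n y hy
      have hy0 : (0:ℝ) < y := lt_of_lt_of_le (by
        have : (0:ℝ) < (q (n+1) : ℝ) := by exact_mod_cast (hqprime (n+1)).pos
        exact this) hy
      rw [Function.iterate_succ_apply' g, Function.iterate_succ_apply L, ih (L y) hLy]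
      simp only [hgdef, hLdef]
      exact Real.rpow_logb (by norm_num) (by norm_num) hy0
  set u : ℕ → ℝ := fun n => L^[n] ((q n : ℝ)) with hudef
  set v : ℕ → ℝ := fun n => L^[n] ((q n : ℝ) + 1) with hvdef
  have hEu : ∀ n, g^[n] (u n) = (q n : ℝ) := fun n => hcancel n _ le_rfl
  have hEv : ∀ n, g^[n] (v n) = (q n : ℝ) + 1 := fun n =>
    hcancel n _ (by linarith [le_refl ((q n : ℝ))])
  have husucc : ∀ n, u n ≤ u (n + 1) := by
    intro n
    have : g^[n+1] (u n) ≤ g^[n+1] (u (n + 1)) := by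
      rw [hEu (n+1), Function.iterate_succ_apply' g, hEu n, hcast]
      exact_mod_cast (hstep n).1
    exact (hE (n+1)).le_iff_le.1 this
  have hvsucc : ∀ n, v (n + 1) < v n := by
    intro n
    have : g^[n+1] (v (n + 1)) < g^[n+1] (v n) := by
      rw [hEv (n+1), Function.iterate_succ_apply' g, hEv n]
      have h1 : g ((q n : ℝ) + 1) = ((2 ^ (q n + 1) : ℕ) : ℝ) := by
        rw [← hcast (q n + 1)]; push_cast; ring_nf
      rw [h1]
      have := (hstep n).2
      have : ((q (n+1) : ℕ) : ℝ) + 2 ≤ ((2 ^ (q n + 1) : ℕ) : ℝ) := by exact_mod_cast this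
      linarith
    exact (hE (n+1)).lt_iff_lt.1 this
  have huv : ∀ n, u n < v n := by
    intro n
    have : g^[n] (u n) < g^[n] (v n) := by rw [hEu, hEv]; linarith
    exact (hE n).lt_iff_lt.1 this
  have humono : Monotone u := monotone_nat_of_le_succ husucc
  have hvanti : Antitone v := antitone_nat_of_succ_le (fun n => (hvsucc n).le)
  have hubd : ∀ n m : ℕ, u n ≤ v m := by
    intro n m
    rcases le_total n m with h | h
    · exact le_trans (humono h) (huv m).le
    · exact le_trans (huv n).le (hvanti h)
  have hbdd : BddAbove (Set.range u) := ⟨v 0, by rintro x ⟨n, rfl⟩; exact hubd n 0⟩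
  set α := ⨆ n, u n with hα
  have hαge : ∀ n, u n ≤ α := fun n => le_ciSup hbdd n
  have hαlt : ∀ n, α < v n := by
    intro n
    have h1 : α ≤ v (n + 1) := ciSup_le (fun k => hubd k (n + 1))
    exact lt_of_le_of_lt h1 (hvsucc n)
  have hu0 : u 0 = (q 0 : ℝ) := by simp [hudef]
  have hαpos : 0 < α := by
    have : (q 0 : ℝ) ≤ α := hu0 ▸ hαge 0
    have h4 : (4:ℝ) ≤ (q 0 : ℝ) := by exact_mod_cast hq4 0
    linarith
  refine ⟨α, hαpos, ?_⟩
  intro a ha0 harec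
  have haE : ∀ n, a n = g^[n] α := by
    intro n
    induction n with
    | zero => simpa using ha0
    | succ n ih => rw [harec n, ih, Function.iterate_succ_apply' g]
  have hfloor : ∀ n, ⌊a n⌋ = (q n : ℤ) := by
    intro n
    rw [haE n, Int.floor_eq_iff]
    constructor
    · have := (hE n).monotone (hαge n)
      rw [hEu n] at this
      exact_mod_cast this
    · have := (hE n) (hαlt n)
      rw [hEv n] at this
      push_cast
      exact this
  constructor
  · intro n
    rw [hfloor n, hfloor (n+1)]
    have h1 : q n < 2 ^ q n := Nat.lt_two_pow_self (n := q n)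
    have h2 : q n < q (n+1) := lt_of_lt_of_le h1 (hstep n).1
    exact_mod_cast h2
  · intro n
    rw [hfloor n]
    exact Nat.prime_iff_prime_int.mp (hqprime n)
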